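/- Let ν₀ be the measure on [-π/2,π/2]² supported on the diagonal y = -x with density cos x · δ(x + y), and for 0 < λ ≤ 1 let c(x,y,λ) be the vector (3/4)·((λ sin x + sin ζ)³/sin ζ)·cos((x-y)/2)·(cos(ζ + (x-y)/2), -sin(ζ + (x-y)/2)) with ζ = ζ(x,λ) = arcsin(√(1-λ²cos²x)). Then ∫∫ c(x,y,λ) dν₀(x,y) = (0, -1); i.e., R_T[ν₀, λ] = 0 and R_L[ν₀, λ] = -1. -/

import Mathlib

open Real MeasureTheory
open scoped ENNReal NNReal

noncomputable def gammaM : Measure ℝ :=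
  (volume.restrict (Set.Icc (-(π/2)) (π/2))).withDensity
    (fun φ => ENNReal.ofReal (Real.cos φ))

noncomputable def nuZero : Measure (ℝ × ℝ) :=
  gammaM.map (fun x => (x, -x))

noncomputable def zeta (x lam : ℝ) : ℝ :=
  Real.arcsin (Real.sqrt (1 - lam^2 * Real.cos x ^ 2))

/-- transversal component of the cost `c(x,y,λ)` for `0 < λ ≤ 1`. -/
noncomputable def cT (lam : ℝ) (p : ℝ × ℝ) : ℝ :=
  (3/4) * ((lam * Real.sin p.1 + Real.sin (zeta p.1 lam))^3 / Real.sin (zeta p.1 lam)) *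
    Real.cos ((p.1 - p.2)/2) * Real.cos (zeta p.1 lam + (p.1 - p.2)/2)

/-- longitudinal component of the cost `c(x,y,λ)` for `0 < λ ≤ 1`. -/
noncomputable def cL (lam : ℝ) (p : ℝ × ℝ) : ℝ :=
  -((3/4) * ((lam * Real.sin p.1 + Real.sin (zeta p.1 lam))^3 / Real.sin (zeta p.1 lam)) *
    Real.cos ((p.1 - p.2)/2) * Real.sin (zeta p.1 lam + (p.1 - p.2)/2))

/-! ### Auxiliary definitions and lemmas -/

lemma continuous_zeta' (lam : ℝ) : Continuous (fun x : ℝ => zeta x lam) :=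
  Real.continuous_arcsin.comp (Real.continuous_sqrt.comp (by fun_prop))

lemma measurable_cT' (lam : ℝ) : Measurable (cT lam) := by
  have hz : Continuous (fun p : ℝ×ℝ => zeta p.1 lam) := (continuous_zeta' lam).comp continuous_fst
  have hA : Continuous (fun p : ℝ×ℝ => (lam * Real.sin p.1 + Real.sin (zeta p.1 lam))^3) := by
    fun_prop
  have hB : Continuous (fun p : ℝ×ℝ => Real.sin (zeta p.1 lam)) := Real.continuous_sin.comp hz
  have hC : Continuous (fun p : ℝ×ℝ => Real.cos ((p.1 - p.2)/2)) := by fun_prop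
  have hD : Continuous (fun p : ℝ×ℝ => Real.cos (zeta p.1 lam + (p.1 - p.2)/2)) := by fun_prop
  exact (((measurable_const.mul (hA.measurable.div hB.measurable))).mul hC.measurable).mul
    hD.measurable

lemma measurable_cL' (lam : ℝ) : Measurable (cL lam) := by
  have hz : Continuous (fun p : ℝ×ℝ => zeta p.1 lam) := (continuous_zeta' lam).comp continuous_fst
  have hA : Continuous (fun p : ℝ×ℝ => (lam * Real.sin p.1 + Real.sin (zeta p.1 lam))^3) := by
    fun_prop
  have hB : Continuous (fun p : ℝ×ℝ => Real.sin (zeta p.1 lam)) := Real.continuous_sin.comp hz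
  have hC : Continuous (fun p : ℝ×ℝ => Real.cos ((p.1 - p.2)/2)) := by fun_prop
  have hD : Continuous (fun p : ℝ×ℝ => Real.sin (zeta p.1 lam + (p.1 - p.2)/2)) := by fun_prop
  exact ((((measurable_const.mul (hA.measurable.div hB.measurable))).mul hC.measurable).mul
    hD.measurable).neg

lemma integral_nuZero' (F : ℝ × ℝ → ℝ) (hF : Measurable F) :
    ∫ p, F p ∂nuZero = ∫ x in (-(π/2))..(π/2), Real.cos x * F (x, -x) := by
  rw [nuZero, integral_map (by fun_prop) hF.aestronglyMeasurable, gammaM]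
  rw [show (fun φ => ENNReal.ofReal (Real.cos φ))
      = (fun φ => ((Real.cos φ).toNNReal : ℝ≥0∞)) from rfl]
  rw [integral_withDensity_eq_integral_smul (by measurability)]
  rw [intervalIntegral.integral_of_le (by linarith [Real.pi_pos]),
    ← MeasureTheory.integral_Icc_eq_integral_Ioc]
  refine setIntegral_congr_fun measurableSet_Icc (fun x hx => ?_)
  have : Real.cos x ≥ 0 := Real.cos_nonneg_of_mem_Icc hx
  simp [NNReal.smul_def, Real.coe_toNNReal _ this]

noncomputable def sig (lam x : ℝ) : ℝ := Real.sqrt (1 - lam^2 * Real.cos x ^ 2)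

noncomputable def fT' (lam x : ℝ) : ℝ :=
  (3/4) * ((lam * Real.sin x + sig lam x)^3 / sig lam x) *
    (Real.cos x * Real.cos x * (lam * Real.cos x * Real.cos x - sig lam x * Real.sin x))

noncomputable def fL' (lam x : ℝ) : ℝ :=
  -((3/4) * ((lam * Real.sin x + sig lam x)^3 / sig lam x) *
    (Real.cos x * Real.cos x * Real.cos x * (sig lam x + lam * Real.sin x)))

lemma arg_nonneg' (lam x : ℝ) (h0 : 0 < lam) (h1 : lam ≤ 1) : 0 ≤ 1 - lam^2 * Real.cos x ^ 2 := by
  nlinarith [Real.cos_sq_le_one x, sq_nonneg (Real.cos x), sq_nonneg lam]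

lemma sin_zeta' (lam x : ℝ) (h0 : 0 < lam) (h1 : lam ≤ 1) : Real.sin (zeta x lam) = sig lam x :=
  Real.sin_arcsin (le_trans (by norm_num) (Real.sqrt_nonneg _))
    (Real.sqrt_le_one.mpr (by nlinarith [sq_nonneg (lam * Real.cos x)]))

lemma sig_sq' (lam x : ℝ) (h0 : 0 < lam) (h1 : lam ≤ 1) : sig lam x ^ 2 = 1 - lam^2 * Real.cos x ^ 2 :=
  Real.sq_sqrt (arg_nonneg' lam x h0 h1)

lemma cos_zeta' (lam x : ℝ) (h0 : 0 < lam) (h1 : lam ≤ 1)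
    (hx : x ∈ Set.Icc (-(π/2)) (π/2)) : Real.cos (zeta x lam) = lam * Real.cos x := by
  have hc : 0 ≤ Real.cos x := Real.cos_nonneg_of_mem_Icc hx
  rw [zeta, Real.cos_arcsin, Real.sq_sqrt (arg_nonneg' lam x h0 h1),
    show 1 - (1 - lam^2 * Real.cos x ^ 2) = (lam * Real.cos x)^2 by ring,
    Real.sqrt_sq (by positivity)]

lemma cT_eq' (lam x : ℝ) (h0 : 0 < lam) (h1 : lam ≤ 1)
    (hx : x ∈ Set.Icc (-(π/2)) (π/2)) : Real.cos x * cT lam (x, -x) = fT' lam x := by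
  have hxx : (x - -x)/2 = x := by ring
  rw [cT, fT']
  simp only [hxx, Real.cos_add, sin_zeta' lam x h0 h1, cos_zeta' lam x h0 h1 hx]
  ring

lemma cL_eq' (lam x : ℝ) (h0 : 0 < lam) (h1 : lam ≤ 1)
    (hx : x ∈ Set.Icc (-(π/2)) (π/2)) : Real.cos x * cL lam (x, -x) = fL' lam x := by
  have hxx : (x - -x)/2 = x := by ring
  rw [cL, fL']
  simp only [hxx, Real.sin_add, sin_zeta' lam x h0 h1, cos_zeta' lam x h0 h1 hx]
  ring

/-! ### The case `lam < 1` -/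

lemma sig_pos' (lam x : ℝ) (hlt : lam < 1) (h0 : 0 < lam) : 0 < sig lam x := by
  apply Real.sqrt_pos.2
  nlinarith [Real.cos_sq_le_one x, sq_nonneg (Real.cos x)]

lemma continuous_sig (lam : ℝ) : Continuous (sig lam) :=
  Real.continuous_sqrt.comp (by fun_prop)

lemma continuous_fT' (lam : ℝ) (hlt : lam < 1) (h0 : 0 < lam) : Continuous (fT' lam) := by
  have h := (continuous_sig lam)
  refine Continuous.mul (Continuous.mul continuous_const (Continuous.div (by fun_prop) h
    (fun x => (sig_pos' lam x hlt h0).ne'))) (by fun_prop)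

lemma continuous_fL' (lam : ℝ) (hlt : lam < 1) (h0 : 0 < lam) : Continuous (fL' lam) := by
  have h := (continuous_sig lam)
  refine Continuous.neg (Continuous.mul (Continuous.mul continuous_const (Continuous.div
    (by fun_prop) h (fun x => (sig_pos' lam x hlt h0).ne'))) (by fun_prop))

lemma hasDerivAt_sig' (lam x : ℝ) (hlt : lam < 1) (h0 : 0 < lam) :
    HasDerivAt (sig lam) (lam^2 * Real.sin x * Real.cos x / sig lam x) x := by
  have hbase : HasDerivAt (fun y : ℝ => 1 - lam^2 * Real.cos y ^ 2)
      (2 * lam^2 * Real.sin x * Real.cos x) x := by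
    have h := (((Real.hasDerivAt_cos x).pow 2).const_mul (lam^2)).const_sub 1
    refine h.congr_deriv (Eq.symm ?_)
    push_cast
    ring
  have hne : (1 - lam^2 * Real.cos x ^ 2) ≠ 0 := by
    nlinarith [Real.cos_sq_le_one x, sq_nonneg (Real.cos x)]
  have h := hbase.sqrt hne
  refine h.congr_deriv (Eq.symm ?_)
  have hσ := sig_pos' lam x hlt h0
  rw [show Real.sqrt (1 - lam^2 * Real.cos x ^2) = sig lam x from rfl]
  field_simp

lemma hasDerivAt_GT' (lam x : ℝ) (hlt : lam < 1) (h0 : 0 < lam) :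
    HasDerivAt (fun y => (1/4 : ℝ) * ((lam * Real.sin y + sig lam y)^3 * Real.cos y ^ 3))
      (fT' lam x) x := by
  have h1 : HasDerivAt (fun y => lam * Real.sin y + sig lam y)
      (lam * Real.cos x + lam^2 * Real.sin x * Real.cos x / sig lam x) x :=
    ((Real.hasDerivAt_sin x).const_mul lam).add (hasDerivAt_sig' lam x hlt h0)
  have h := ((h1.pow 3).mul ((Real.hasDerivAt_cos x).pow 3)).const_mul (1/4 : ℝ)
  refine h.congr_deriv (Eq.symm ?_)
  have hσ := (sig_pos' lam x hlt h0).ne'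
  rw [fT']
  push_cast
  simp only [Pi.pow_apply, Pi.mul_apply]
  field_simp
  ring

noncomputable def antiL (lam : ℝ) : ℝ → ℝ := fun y =>
  -(3/4 : ℝ) * ((-(4*lam^2/3) * Real.sin y ^ 5 + (2*lam^2 - (1-lam^2)/3) * Real.sin y ^ 3
      + (1-lam^2) * Real.sin y) * sig lam y)
  - 3*lam * ((1-lam^2)/2 * Real.sin y ^ 2 + (2*lam^2-(1-lam^2))/4 * Real.sin y ^ 4
      - lam^2/3 * Real.sin y ^ 6)

lemma hasDerivAt_antiL (lam x : ℝ) (hlt : lam < 1) (h0 : 0 < lam) :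
    HasDerivAt (antiL lam) (fL' lam x) x := by
  have hs := Real.hasDerivAt_sin x
  have hP1 := (((hs.pow 5).const_mul (-(4*lam^2/3))).add
      ((hs.pow 3).const_mul (2*lam^2 - (1-lam^2)/3))).add (hs.const_mul (1-lam^2))
  have hA := (hP1.mul (hasDerivAt_sig' lam x hlt h0)).const_mul (-(3/4 : ℝ))
  have hP2 := ((((hs.pow 2).const_mul ((1-lam^2)/2)).add
      ((hs.pow 4).const_mul ((2*lam^2-(1-lam^2))/4))).sub
      ((hs.pow 6).const_mul (lam^2/3))).const_mul (3*lam)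
  have h := hA.sub hP2
  have heq : antiL lam = (fun y =>
      -(3/4 : ℝ) * ((-(4*lam^2/3) * Real.sin y ^ 5 + (2*lam^2 - (1-lam^2)/3) * Real.sin y ^ 3
        + (1-lam^2) * Real.sin y) * sig lam y)
      - 3*lam * ((1-lam^2)/2 * Real.sin y ^ 2 + (2*lam^2-(1-lam^2))/4 * Real.sin y ^ 4
        - lam^2/3 * Real.sin y ^ 6)) := by
    rfl
  rw [heq]
  refine h.congr_deriv (Eq.symm ?_)
  have hσ2 := sig_sq' lam x h0 hlt.le
  have hpy := Real.sin_sq_add_cos_sq x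
  have hσ := (sig_pos' lam x hlt h0).ne'
  rw [fL']
  push_cast
  simp only [Pi.pow_apply, Pi.mul_apply, Pi.add_apply, Pi.sub_apply]
  set s := Real.sin x
  set c := Real.cos x
  set σ := sig lam x
  have hinv : σ * σ⁻¹ = 1 := mul_inv_cancel₀ hσ
  linear_combination (c*(-3*lam*s + 3*lam*s^3 + 3*lam^3*s - 9*lam^3*s^3 + 6*lam^3*s^5)
      + c*σ*((-21/4)*lam^2*s^2 + 5*lam^2*s^4 + (3/4)*lam^2 + (3/4)*s^2 - 3/4)) * hinv
    + (-(3*c/(4*σ)) * (c^2 * ((1-lam^2) + 7*lam^2*s^2 + σ^2 + 4*lam*s*σ)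
        - (-(20*lam^2/3)*s^4 + (6*lam^2-(1-lam^2))*s^2 + (1-lam^2)))) * hσ2
      + (-(c/σ) * ((3/4)*(8*lam^4*s^4 + 8*lam^2*(1-lam^2)*s^2 + (1-lam^2)^2)
        + 3*lam*s*σ*((1-lam^2)+2*lam^2*s^2)
        + (3/4)*lam^2*(-(20*lam^2/3)*s^4 + (6*lam^2-(1-lam^2))*s^2 + (1-lam^2))
      - (3/4)*lam^2*c^2*((1-lam^2) + 7*lam^2*s^2 + σ^2 + 4*lam*s*σ))) * hpy

lemma sig_pi_div_two (lam : ℝ) : sig lam (π/2) = 1 := by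
  rw [sig, Real.cos_pi_div_two]
  norm_num

lemma sig_neg_pi_div_two (lam : ℝ) : sig lam (-(π/2)) = 1 := by
  rw [sig, Real.cos_neg, Real.cos_pi_div_two]
  norm_num

lemma integral_fT_lt (lam : ℝ) (hlt : lam < 1) (h0 : 0 < lam) :
    ∫ x in (-(π/2))..(π/2), fT' lam x = 0 := by
  rw [intervalIntegral.integral_eq_sub_of_hasDerivAt
    (fun x _ => hasDerivAt_GT' lam x hlt h0)
    ((continuous_fT' lam hlt h0).intervalIntegrable _ _)]
  simp [Real.cos_pi_div_two]

lemma integral_fL_lt (lam : ℝ) (hlt : lam < 1) (h0 : 0 < lam) :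
    ∫ x in (-(π/2))..(π/2), fL' lam x = -1 := by
  rw [intervalIntegral.integral_eq_sub_of_hasDerivAt
    (fun x _ => hasDerivAt_antiL lam x hlt h0)
    ((continuous_fL' lam hlt h0).intervalIntegrable _ _)]
  rw [antiL, antiL]
  simp only [sig_pi_div_two, sig_neg_pi_div_two, Real.sin_pi_div_two, Real.sin_neg,
    Real.sin_pi_div_two]
  ring

/-! ### The case `lam = 1` -/

lemma sig_one (x : ℝ) : sig 1 x = |Real.sin x| := by
  rw [sig, show 1 - (1:ℝ)^2 * Real.cos x ^ 2 = Real.sin x ^ 2 by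
    linear_combination -Real.sin_sq_add_cos_sq x, Real.sqrt_sq_eq_abs]

lemma fT_one_neg (x : ℝ) (hx : x ∈ Set.Icc (-(π/2)) 0) : fT' 1 x = 0 := by
  have hs : Real.sin x ≤ 0 := by
    apply Real.sin_nonpos_of_nonpos_of_neg_pi_le hx.2
    linarith [hx.1, Real.pi_pos]
  rw [fT', sig_one, abs_of_nonpos hs]
  norm_num

lemma fL_one_neg (x : ℝ) (hx : x ∈ Set.Icc (-(π/2)) 0) : fL' 1 x = 0 := by
  have hs : Real.sin x ≤ 0 := by
    apply Real.sin_nonpos_of_nonpos_of_neg_pi_le hx.2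
    linarith [hx.1, Real.pi_pos]
  rw [fL', sig_one, abs_of_nonpos hs]
  norm_num

lemma fT_one_pos (x : ℝ) (hx : x ∈ Set.Icc 0 (π/2)) :
    fT' 1 x = 6 * Real.sin x ^2 * Real.cos x ^4 - 6 * Real.sin x ^4 * Real.cos x ^2 := by
  have hs : 0 ≤ Real.sin x := Real.sin_nonneg_of_nonneg_of_le_pi hx.1
    (by linarith [hx.2, Real.pi_pos])
  rw [fT', sig_one, abs_of_nonneg hs]
  rcases eq_or_ne (Real.sin x) 0 with h | h
  · rw [h]; norm_num
  · field_simp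
    ring

lemma fL_one_pos (x : ℝ) (hx : x ∈ Set.Icc 0 (π/2)) :
    fL' 1 x = -(12 * Real.sin x ^3 * Real.cos x ^3) := by
  have hs : 0 ≤ Real.sin x := Real.sin_nonneg_of_nonneg_of_le_pi hx.1
    (by linarith [hx.2, Real.pi_pos])
  rw [fL', sig_one, abs_of_nonneg hs]
  rcases eq_or_ne (Real.sin x) 0 with h | h
  · rw [h]; norm_num
  · field_simp
    ring

lemma measurable_fT' (lam : ℝ) : Measurable (fT' lam) := by
  have h := (continuous_sig lam).measurable
  exact (measurable_const.mul ((by fun_prop : Measurable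
    (fun x => (lam * Real.sin x + sig lam x)^3)).div h)).mul (by fun_prop)

lemma measurable_fL' (lam : ℝ) : Measurable (fL' lam) := by
  have h := (continuous_sig lam).measurable
  exact ((measurable_const.mul ((by fun_prop : Measurable
    (fun x => (lam * Real.sin x + sig lam x)^3)).div h)).mul (by fun_prop)).neg

lemma integral_fT_one : ∫ x in (-(π/2))..(π/2), fT' 1 x = 0 := by
  have hpi := Real.pi_pos
  have hi1 : IntervalIntegrable (fT' 1) volume (-(π/2)) 0 := by
    rw [intervalIntegrable_iff_integrableOn_Ioc_of_le (by linarith)]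
    exact (integrableOn_zero (ε' := ℝ)).congr_fun
      (fun x hx => (fT_one_neg x (Set.Ioc_subset_Icc_self hx)).symm) measurableSet_Ioc
  have hi2 : IntervalIntegrable (fT' 1) volume 0 (π/2) := by
    rw [intervalIntegrable_iff_integrableOn_Ioc_of_le (by linarith)]
    refine (Continuous.integrableOn_Ioc (by fun_prop)).congr_fun
      (fun x hx => (fT_one_pos x (Set.Ioc_subset_Icc_self hx)).symm) measurableSet_Ioc
  rw [← intervalIntegral.integral_add_adjacent_intervals hi1 hi2]
  have e1 : ∫ x in (-(π/2))..0, fT' 1 x = 0 := by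
    rw [intervalIntegral.integral_congr (g := fun _ => (0:ℝ))
      (by rw [Set.uIcc_of_le (by linarith)]; exact fun x hx => fT_one_neg x hx)]
    simp
  have e2 : ∫ x in (0:ℝ)..(π/2), fT' 1 x = 0 := by
    rw [intervalIntegral.integral_congr
      (g := fun x => 6 * Real.sin x ^2 * Real.cos x ^4 - 6 * Real.sin x ^4 * Real.cos x ^2)
      (by rw [Set.uIcc_of_le (by linarith)]; exact fun x hx => fT_one_pos x hx)]
    have hd : ∀ x ∈ Set.uIcc (0:ℝ) (π/2), HasDerivAt
        (fun y => (2:ℝ) * (Real.sin y ^ 3 * Real.cos y ^ 3))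
        (6 * Real.sin x ^2 * Real.cos x ^4 - 6 * Real.sin x ^4 * Real.cos x ^2) x := by
      intro x _
      have h := (((Real.hasDerivAt_sin x).pow 3).mul ((Real.hasDerivAt_cos x).pow 3)).const_mul
        (2:ℝ)
      refine h.congr_deriv (Eq.symm ?_)
      push_cast
      simp only [Pi.pow_apply, Pi.mul_apply]
      ring
    rw [intervalIntegral.integral_eq_sub_of_hasDerivAt hd
      (Continuous.intervalIntegrable (by fun_prop) _ _)]
    simp [Real.cos_pi_div_two]
  rw [e1, e2]
  norm_num

lemma integral_fL_one : ∫ x in (-(π/2))..(π/2), fL' 1 x = -1 := by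
  have hpi := Real.pi_pos
  have hi1 : IntervalIntegrable (fL' 1) volume (-(π/2)) 0 := by
    rw [intervalIntegrable_iff_integrableOn_Ioc_of_le (by linarith)]
    exact (integrableOn_zero (ε' := ℝ)).congr_fun
      (fun x hx => (fL_one_neg x (Set.Ioc_subset_Icc_self hx)).symm) measurableSet_Ioc
  have hi2 : IntervalIntegrable (fL' 1) volume 0 (π/2) := by
    rw [intervalIntegrable_iff_integrableOn_Ioc_of_le (by linarith)]
    refine (Continuous.integrableOn_Ioc (by fun_prop)).congr_fun
      (fun x hx => (fL_one_pos x (Set.Ioc_subset_Icc_self hx)).symm) measurableSet_Ioc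
  rw [← intervalIntegral.integral_add_adjacent_intervals hi1 hi2]
  have e1 : ∫ x in (-(π/2))..0, fL' 1 x = 0 := by
    rw [intervalIntegral.integral_congr (g := fun _ => (0:ℝ))
      (by rw [Set.uIcc_of_le (by linarith)]; exact fun x hx => fL_one_neg x hx)]
    simp
  have e2 : ∫ x in (0:ℝ)..(π/2), fL' 1 x = -1 := by
    rw [intervalIntegral.integral_congr
      (g := fun x => -(12 * Real.sin x ^3 * Real.cos x ^3))
      (by rw [Set.uIcc_of_le (by linarith)]; exact fun x hx => fL_one_pos x hx)]
    have hd : ∀ x ∈ Set.uIcc (0:ℝ) (π/2), HasDerivAt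
        (fun y => (2:ℝ) * Real.sin y ^ 6 - 3 * Real.sin y ^ 4)
        (-(12 * Real.sin x ^3 * Real.cos x ^3)) x := by
      intro x _
      have h := (((Real.hasDerivAt_sin x).pow 6).const_mul (2:ℝ)).sub
        (((Real.hasDerivAt_sin x).pow 4).const_mul (3:ℝ))
      refine h.congr_deriv (Eq.symm ?_)
      push_cast
      linear_combination (-12 * Real.sin x ^ 3 * Real.cos x) * Real.sin_sq_add_cos_sq x
    rw [intervalIntegral.integral_eq_sub_of_hasDerivAt hd
      (Continuous.intervalIntegrable (by fun_prop) _ _)]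
    norm_num
  rw [e1, e2]
  norm_num

/-! ### Main theorem -/

theorem stmt_7 (lam : ℝ) (h0 : 0 < lam) (h1 : lam ≤ 1) :
    (∫ p, cT lam p ∂nuZero) = 0 ∧ (∫ p, cL lam p ∂nuZero) = -1 := by
  have hpi := Real.pi_pos
  have hT : (∫ p, cT lam p ∂nuZero) = ∫ x in (-(π/2))..(π/2), fT' lam x := by
    rw [integral_nuZero' (cT lam) (measurable_cT' lam)]
    exact intervalIntegral.integral_congr (by
      rw [Set.uIcc_of_le (by linarith)]
      exact fun x hx => cT_eq' lam x h0 h1 hx)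
  have hL : (∫ p, cL lam p ∂nuZero) = ∫ x in (-(π/2))..(π/2), fL' lam x := by
    rw [integral_nuZero' (cL lam) (measurable_cL' lam)]
    exact intervalIntegral.integral_congr (by
      rw [Set.uIcc_of_le (by linarith)]
      exact fun x hx => cL_eq' lam x h0 h1 hx)
  rcases eq_or_lt_of_le h1 with heq | hlt
  · subst heq
    exact ⟨hT.trans integral_fT_one, hL.trans integral_fL_one⟩
  · exact ⟨hT.trans (integral_fT_lt lam hlt h0), hL.trans (integral_fL_lt lam hlt h0)⟩
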